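/- Let $\mathcal{A}$ be a countable Boolean subalgebra of $\wp(\mathbb{N})/\mathrm{Fin}$. Then there is a Boolean subalgebra $\mathcal{A}'$ of $\wp(\mathbb{N})$ such that the quotient map $\rho: \wp(\mathbb{N}) \to \wp(\mathbb{N})/\mathrm{Fin}$ restricted to $\mathcal{A}'$ is a Boolean isomorphism onto $\mathcal{A}$. -/

import Mathlib

/-- The setoid on `Set ℕ` identifying sets that agree modulo a finite set. -/
def finSetoid : Setoid (Set ℕ) where
  r A B := ∀ᶠ n in Filter.cofinite, (n ∈ A ↔ n ∈ B)
  iseqv := by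
    refine ⟨fun A => Filter.Eventually.of_forall fun n => Iff.rfl, fun h => ?_,
      fun h h' => ?_⟩
    · filter_upwards [h] with n hn using hn.symm
    · filter_upwards [h, h'] with n h1 h2 using h1.trans h2

/-- The quotient Boolean algebra `𝒫(ℕ)/Fin`. -/
def PFin : Type := Quotient finSetoid

/-- The quotient map `ρ : 𝒫(ℕ) → 𝒫(ℕ)/Fin`. -/
def rhoFin (A : Set ℕ) : PFin := Quotient.mk finSetoid A

/-- Meet (intersection) in `𝒫(ℕ)/Fin`. -/
def pfinInf : PFin → PFin → PFin :=
  Quotient.map₂ (· ∩ ·) (by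
    intro A A' hA B B' hB
    show ∀ᶠ n in Filter.cofinite, (n ∈ A ∩ B ↔ n ∈ A' ∩ B')
    filter_upwards [hA, hB] with n h1 h2
    simp only [Set.mem_inter_iff]
    exact and_congr h1 h2)

/-- Join (union) in `𝒫(ℕ)/Fin`. -/
def pfinSup : PFin → PFin → PFin :=
  Quotient.map₂ (· ∪ ·) (by
    intro A A' hA B B' hB
    show ∀ᶠ n in Filter.cofinite, (n ∈ A ∪ B ↔ n ∈ A' ∪ B')
    filter_upwards [hA, hB] with n h1 h2
    simp only [Set.mem_union]
    exact or_congr h1 h2)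

/-- Complement in `𝒫(ℕ)/Fin`. -/
def pfinCompl : PFin → PFin :=
  Quotient.map (·ᶜ) (by
    intro A A' hA
    show ∀ᶠ n in Filter.cofinite, (n ∈ Aᶜ ↔ n ∈ A'ᶜ)
    filter_upwards [hA] with n h1
    simp only [Set.mem_compl_iff]
    exact not_congr h1)

namespace Lift
open Filter Set

/-- Sets equal modulo a finite set. -/
abbrev Eqv (A B : Set ℕ) : Prop := ∀ᶠ x in Filter.cofinite, (x ∈ A ↔ x ∈ B)

variable (E : ℕ → Set ℕ)

open Classical in
/-- The corrected exact partition tree: `PP E n s` is the atom at level `n`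
determined by the pattern `s` of memberships in `E 0, …, E (n-1)`, corrected
so that atoms which are null modulo finite are exactly empty. -/
noncomputable def PP : ℕ → (ℕ → Bool) → Set ℕ
  | 0, _ => Set.univ
  | (n+1), s =>
      if ((PP n s) ∩ E n).Finite then (if s n then ∅ else PP n s)
      else if ((PP n s) \ E n).Finite then (if s n then PP n s else ∅)
      else (if s n then PP n s ∩ E n else PP n s \ E n)

open Classical in
theorem PP_succ (n : ℕ) (s : ℕ → Bool) : PP E (n+1) s =
      if ((PP E n s) ∩ E n).Finite then (if s n then ∅ else PP E n s)
      else if ((PP E n s) \ E n).Finite then (if s n then PP E n s else ∅)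
      else (if s n then PP E n s ∩ E n else PP E n s \ E n) := by
  rw [PP]

/-- The naive atom. -/
def NA (n : ℕ) (s : ℕ → Bool) : Set ℕ := {x | ∀ i < n, (x ∈ E i ↔ s i = true)}

theorem PP_congr : ∀ {n : ℕ} {s t : ℕ → Bool}, (∀ i < n, s i = t i) → PP E n s = PP E n t
  | 0, _, _, _ => rfl
  | (n+1), s, t, h => by
    have h1 : PP E n s = PP E n t := PP_congr (fun i hi => h i (Nat.lt_succ_of_lt hi))
    have h2 : s n = t n := h n (Nat.lt_succ_self n)
    rw [PP_succ, PP_succ, h1, h2]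

theorem PP_subset (n : ℕ) (s : ℕ → Bool) : PP E (n+1) s ⊆ PP E n s := by
  rw [PP_succ]
  split_ifs <;> simp [Set.diff_subset, Set.inter_subset_left]

theorem PP_step_cover {n : ℕ} {s : ℕ → Bool} {x : ℕ} (hx : x ∈ PP E n s) :
    ∃ b, x ∈ PP E (n+1) (Function.update s n b) := by
  have hcong : ∀ b, PP E n (Function.update s n b) = PP E n s :=
    fun b => PP_congr E fun i hi => Function.update_of_ne (Nat.ne_of_lt hi) _ _
  by_cases hT : ((PP E n s) ∩ E n).Finite
  · refine ⟨false, ?_⟩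
    rw [PP_succ, hcong, if_pos hT, Function.update_self, if_neg (by simp)]
    exact hx
  by_cases hF : ((PP E n s) \ E n).Finite
  · refine ⟨true, ?_⟩
    rw [PP_succ, hcong, if_neg hT, if_pos hF, Function.update_self, if_pos rfl]
    exact hx
  by_cases hE : x ∈ E n
  · refine ⟨true, ?_⟩
    rw [PP_succ, hcong, if_neg hT, if_neg hF, Function.update_self, if_pos rfl]
    exact ⟨hx, hE⟩
  · refine ⟨false, ?_⟩
    rw [PP_succ, hcong, if_neg hT, if_neg hF, Function.update_self, if_neg (by simp)]
    exact ⟨hx, hE⟩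

theorem PP_exists : ∀ (n : ℕ) (x : ℕ), ∃ s, x ∈ PP E n s
  | 0, x => ⟨fun _ => false, Set.mem_univ x⟩
  | (n+1), x => by
    obtain ⟨s, hs⟩ := PP_exists n x
    obtain ⟨b, hb⟩ := PP_step_cover E hs
    exact ⟨_, hb⟩

theorem PP_unique : ∀ {n : ℕ} {s t : ℕ → Bool} {x : ℕ},
    x ∈ PP E n s → x ∈ PP E n t → ∀ i < n, s i = t i
  | 0, _, _, _ => fun _ _ _ h => absurd h (Nat.not_lt_zero _)
  | (n+1), s, t, x => fun hs ht => by
    have hlt : ∀ i < n, s i = t i :=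
      PP_unique (PP_subset E n s hs) (PP_subset E n t ht)
    intro i hi
    rcases Nat.lt_succ_iff_lt_or_eq.mp hi with h | rfl
    · exact hlt i h
    have hPt : PP E i t = PP E i s := (PP_congr E hlt).symm
    rw [PP_succ] at hs
    rw [PP_succ, hPt] at ht
    by_cases hT : ((PP E i s) ∩ E i).Finite
    · rw [if_pos hT] at hs ht
      cases hsn : s i <;> cases htn : t i <;> simp_all
    by_cases hF : ((PP E i s) \ E i).Finite
    · rw [if_neg hT, if_pos hF] at hs ht
      cases hsn : s i <;> cases htn : t i <;> simp_all
    · rw [if_neg hT, if_neg hF] at hs ht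
      cases hsn : s i <;> cases htn : t i <;> simp_all

theorem PP_eq_empty_of_finite : ∀ {n : ℕ} {s : ℕ → Bool},
    (PP E n s).Finite → PP E n s = ∅
  | 0, s, h => absurd h (by simpa [PP] using Set.infinite_univ)
  | (n+1), s, h => by
    have tri : PP E (n+1) s = ∅ ∨ PP E (n+1) s = PP E n s ∨ ¬(PP E (n+1) s).Finite := by
      rw [PP_succ]
      split_ifs with h1 h2 h3
      · exact Or.inl rfl
      · exact Or.inr (Or.inl rfl)
      · exact Or.inr (Or.inl rfl)
      · exact Or.inl rfl
      · exact Or.inr (Or.inr h1)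
      · exact Or.inr (Or.inr h3)
    rcases tri with h0 | h0 | h0
    · exact h0
    · rw [h0] at h ⊢
      exact PP_eq_empty_of_finite h
    · exact absurd h h0

theorem eqv_infinite {A B : Set ℕ} (h : Eqv A B) (hA : A.Infinite) : B.Infinite := by
  have hbad : {x | ¬(x ∈ A ↔ x ∈ B)}.Finite := Filter.eventually_cofinite.mp h
  refine Set.Infinite.mono ?_ (hA.diff hbad)
  rintro x ⟨hxA, hx⟩
  simp only [mem_setOf_eq, not_not] at hx
  exact hx.mp hxA

theorem NA_zero (s : ℕ → Bool) : NA E 0 s = Set.univ := by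
  ext x; simp [NA]

theorem NA_succ (n : ℕ) (s : ℕ → Bool) :
    NA E (n+1) s = NA E n s ∩ {x | x ∈ E n ↔ s n = true} := by
  ext x
  simp only [NA, mem_setOf_eq, mem_inter_iff]
  constructor
  · exact fun h => ⟨fun i hi => h i (Nat.lt_succ_of_lt hi), h n (Nat.lt_succ_self n)⟩
  · rintro ⟨h1, h2⟩ i hi
    rcases Nat.lt_succ_iff_lt_or_eq.mp hi with h | rfl
    · exact h1 i h
    · exact h2

theorem PP_eqv_NA : ∀ (n : ℕ) (s : ℕ → Bool), Eqv (PP E n s) (NA E n s)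
  | 0, s => Filter.Eventually.of_forall fun x => by simp [PP, NA_zero]
  | (n+1), s => by
    have IH := PP_eqv_NA n s
    rw [PP_succ, NA_succ]
    by_cases hT : ((PP E n s) ∩ E n).Finite
    · rw [if_pos hT]
      filter_upwards [IH, hT.eventually_cofinite_notMem] with x hIff hxT
      cases hsn : s n
      · simp only [Bool.false_eq_true, if_false, mem_inter_iff, mem_setOf_eq, iff_false]
        exact ⟨fun hx => ⟨hIff.mp hx, fun hE => hxT ⟨hx, hE⟩⟩, fun h => hIff.mpr h.1⟩
      · simp only [if_true, mem_inter_iff, mem_setOf_eq, iff_true, mem_empty_iff_false,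
          false_iff, not_and]
        exact fun hNA hE => hxT ⟨hIff.mpr hNA, hE⟩
    by_cases hF : ((PP E n s) \ E n).Finite
    · rw [if_neg hT, if_pos hF]
      filter_upwards [IH, hF.eventually_cofinite_notMem] with x hIff hxF
      cases hsn : s n
      · simp only [Bool.false_eq_true, if_false, mem_inter_iff, mem_setOf_eq, iff_false,
          mem_empty_iff_false, false_iff, not_and]
        exact fun hNA hE => hxF ⟨hIff.mpr hNA, hE⟩
      · simp only [if_true, mem_inter_iff, mem_setOf_eq, iff_true]
        refine ⟨fun hx => ⟨hIff.mp hx, ?_⟩, fun h => hIff.mpr h.1⟩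
        by_contra hE
        exact hxF ⟨hx, hE⟩
    · rw [if_neg hT, if_neg hF]
      filter_upwards [IH] with x hIff
      cases hsn : s n
      · simp only [Bool.false_eq_true, if_false, mem_inter_iff, mem_setOf_eq, iff_false,
          mem_diff]
        exact and_congr hIff Iff.rfl
      · simp only [if_true, mem_inter_iff, mem_setOf_eq, iff_true]
        exact and_congr hIff Iff.rfl

/-- The lift of the `m`-th element: union of the level-`m+1` atoms inside it. -/
def L (m : ℕ) : Set ℕ := {x | ∃ s, s m = true ∧ x ∈ PP E (m+1) s}

theorem L_iff {m n : ℕ} (h : m < n) (x : ℕ) :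
    x ∈ L E m ↔ ∃ s, s m = true ∧ x ∈ PP E n s := by
  induction n with
  | zero => omega
  | succ n IH =>
    rcases Nat.lt_succ_iff_lt_or_eq.mp h with h' | rfl
    · rw [IH h']
      constructor
      · rintro ⟨s, hsm, hx⟩
        obtain ⟨b, hb⟩ := PP_step_cover E hx
        refine ⟨_, ?_, hb⟩
        rw [Function.update_of_ne (by omega)]
        exact hsm
      · rintro ⟨s, hsm, hx⟩
        exact ⟨s, hsm, PP_subset E n s hx⟩
    · exact Iff.rfl

theorem L_pattern {m n : ℕ} (h : m < n) {s : ℕ → Bool} {x : ℕ} (hx : x ∈ PP E n s) :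
    (x ∈ L E m ↔ s m = true) := by
  rw [L_iff E h]
  constructor
  · rintro ⟨t, htm, hxt⟩
    rw [PP_unique E hx hxt m h]
    exact htm
  · exact fun hsm => ⟨s, hsm, hx⟩

theorem NA_infinite {n : ℕ} {s : ℕ → Bool} {x : ℕ} (hx : x ∈ PP E n s) :
    (NA E n s).Infinite := by
  refine eqv_infinite (PP_eqv_NA E n s) (fun hfin => ?_)
  rw [PP_eq_empty_of_finite E hfin] at hx
  exact hx

theorem pattern_absurd {n : ℕ} {s : ℕ → Bool} {x : ℕ} (hx : x ∈ PP E n s) {bad : Set ℕ}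
    (hbad : bad.Finite) (hsub : NA E n s ⊆ bad) : False :=
  NA_infinite E hx (hbad.subset hsub)

theorem NA_mem_true {n i : ℕ} (hi : i < n) {s : ℕ → Bool} {x : ℕ}
    (hx : x ∈ NA E n s) (hs : s i = true) : x ∈ E i := (hx i hi).mpr hs

theorem NA_mem_false {n i : ℕ} (hi : i < n) {s : ℕ → Bool} {x : ℕ}
    (hx : x ∈ NA E n s) (hs : s i = false) : x ∉ E i := fun hE => by
  rw [(hx i hi).mp hE] at hs
  exact Bool.true_eq_false.mp hs

theorem bool_false {b : Bool} (h : ¬ b = true) : b = false := by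
  cases b <;> simp_all

theorem L_inter {m k j : ℕ} (h : Eqv (E m ∩ E k) (E j)) :
    L E m ∩ L E k = L E j := by
  have hbad : {x | ¬(x ∈ E m ∩ E k ↔ x ∈ E j)}.Finite := Filter.eventually_cofinite.mp h
  ext x
  set n := max (max m k) j + 1 with hn
  have hm : m < n := by omega
  have hk : k < n := by omega
  have hj : j < n := by omega
  obtain ⟨s, hs⟩ := PP_exists E n x
  rw [mem_inter_iff, L_pattern E hm hs, L_pattern E hk hs, L_pattern E hj hs]
  constructor
  · rintro ⟨hsm, hsk⟩
    by_contra hsj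
    have hsj' : s j = false := bool_false hsj
    refine pattern_absurd E hs hbad fun y hy => ?_
    simp only [mem_setOf_eq, mem_inter_iff]
    intro hiff
    exact NA_mem_false E hj hy hsj'
      (hiff.mp ⟨NA_mem_true E hm hy hsm, NA_mem_true E hk hy hsk⟩)
  · intro hsj
    constructor
    · by_contra hsm
      refine pattern_absurd E hs hbad fun y hy => ?_
      simp only [mem_setOf_eq, mem_inter_iff]
      intro hiff
      exact NA_mem_false E hm hy (bool_false hsm)
        (hiff.mpr (NA_mem_true E hj hy hsj)).1
    · by_contra hsk
      refine pattern_absurd E hs hbad fun y hy => ?_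
      simp only [mem_setOf_eq, mem_inter_iff]
      intro hiff
      exact NA_mem_false E hk hy (bool_false hsk)
        (hiff.mpr (NA_mem_true E hj hy hsj)).2

theorem L_union {m k j : ℕ} (h : Eqv (E m ∪ E k) (E j)) :
    L E m ∪ L E k = L E j := by
  have hbad : {x | ¬(x ∈ E m ∪ E k ↔ x ∈ E j)}.Finite := Filter.eventually_cofinite.mp h
  ext x
  set n := max (max m k) j + 1 with hn
  have hm : m < n := by omega
  have hk : k < n := by omega
  have hj : j < n := by omega
  obtain ⟨s, hs⟩ := PP_exists E n x
  rw [mem_union, L_pattern E hm hs, L_pattern E hk hs, L_pattern E hj hs]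
  constructor
  · rintro (hsm | hsk) <;> by_contra hsj
    · refine pattern_absurd E hs hbad fun y hy => ?_
      simp only [mem_setOf_eq, mem_union]
      intro hiff
      exact NA_mem_false E hj hy (bool_false hsj)
        (hiff.mp (Or.inl (NA_mem_true E hm hy hsm)))
    · refine pattern_absurd E hs hbad fun y hy => ?_
      simp only [mem_setOf_eq, mem_union]
      intro hiff
      exact NA_mem_false E hj hy (bool_false hsj)
        (hiff.mp (Or.inr (NA_mem_true E hk hy hsk)))
  · intro hsj
    by_contra hc
    push_neg at hc
    obtain ⟨hsm, hsk⟩ := hc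
    refine pattern_absurd E hs hbad fun y hy => ?_
    simp only [mem_setOf_eq, mem_union]
    intro hiff
    rcases hiff.mpr (NA_mem_true E hj hy hsj) with hE | hE
    · exact NA_mem_false E hm hy (bool_false hsm) hE
    · exact NA_mem_false E hk hy (bool_false hsk) hE

theorem L_compl {m j : ℕ} (h : Eqv (E m)ᶜ (E j)) :
    (L E m)ᶜ = L E j := by
  have hbad : {x | ¬(x ∈ (E m)ᶜ ↔ x ∈ E j)}.Finite := Filter.eventually_cofinite.mp h
  ext x
  set n := max m j + 1 with hn
  have hm : m < n := by omega
  have hj : j < n := by omega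
  obtain ⟨s, hs⟩ := PP_exists E n x
  rw [mem_compl_iff, L_pattern E hm hs, L_pattern E hj hs]
  constructor
  · intro hsm
    by_contra hsj
    refine pattern_absurd E hs hbad fun y hy => ?_
    simp only [mem_setOf_eq, mem_compl_iff]
    intro hiff
    exact NA_mem_false E hj hy (bool_false hsj)
      (hiff.mp (NA_mem_false E hm hy (bool_false hsm)))
  · intro hsj hsm
    refine pattern_absurd E hs hbad fun y hy => ?_
    simp only [mem_setOf_eq, mem_compl_iff]
    intro hiff
    exact hiff.mpr (NA_mem_true E hj hy hsj) (NA_mem_true E hm hy hsm)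

theorem L_congr {m k : ℕ} (h : Eqv (E m) (E k)) : L E m = L E k := by
  have hbad : {x | ¬(x ∈ E m ↔ x ∈ E k)}.Finite := Filter.eventually_cofinite.mp h
  ext x
  set n := max m k + 1 with hn
  have hm : m < n := by omega
  have hk : k < n := by omega
  obtain ⟨s, hs⟩ := PP_exists E n x
  rw [L_pattern E hm hs, L_pattern E hk hs]
  constructor
  · intro hsm
    by_contra hsk
    refine pattern_absurd E hs hbad fun y hy => ?_
    simp only [mem_setOf_eq]
    intro hiff
    exact NA_mem_false E hk hy (bool_false hsk) (hiff.mp (NA_mem_true E hm hy hsm))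
  · intro hsk
    by_contra hsm
    refine pattern_absurd E hs hbad fun y hy => ?_
    simp only [mem_setOf_eq]
    intro hiff
    exact NA_mem_false E hm hy (bool_false hsm) (hiff.mpr (NA_mem_true E hk hy hsk))

theorem L_empty {m : ℕ} (h : Eqv (E m) ∅) : L E m = ∅ := by
  have hbad : {x | ¬(x ∈ E m ↔ x ∈ (∅ : Set ℕ))}.Finite := Filter.eventually_cofinite.mp h
  ext x
  simp only [mem_empty_iff_false, iff_false]
  rintro ⟨s, hsm, hx⟩
  refine pattern_absurd E hx hbad fun y hy => ?_
  simp only [mem_setOf_eq, mem_empty_iff_false, iff_false, not_not]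
  exact NA_mem_true E (Nat.lt_succ_self m) hy hsm

theorem L_univ {m : ℕ} (h : Eqv (E m) Set.univ) : L E m = Set.univ := by
  have hbad : {x | ¬(x ∈ E m ↔ x ∈ (Set.univ : Set ℕ))}.Finite :=
    Filter.eventually_cofinite.mp h
  ext x
  simp only [mem_univ, iff_true]
  obtain ⟨s, hs⟩ := PP_exists E (m+1) x
  have hsm : s m = true := by
    by_contra hsm
    refine pattern_absurd E hs hbad fun y hy => ?_
    simp only [mem_setOf_eq, mem_univ, iff_true]
    exact NA_mem_false E (Nat.lt_succ_self m) hy (bool_false hsm)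
  exact ⟨s, hsm, hs⟩

/-- Extend a finite pattern by `false`. -/
def ext' (m : ℕ) (v : Fin (m+1) → Bool) : ℕ → Bool :=
  fun i => if h : i < m+1 then v ⟨i, h⟩ else false

theorem L_eqv (m : ℕ) : Eqv (L E m) (E m) := by
  have hbad : ∀ v : Fin (m+1) → Bool,
      {x | ¬(x ∈ PP E (m+1) (ext' m v) ↔ x ∈ NA E (m+1) (ext' m v))}.Finite :=
    fun v => Filter.eventually_cofinite.mp (PP_eqv_NA E (m+1) (ext' m v))
  have hBad : (⋃ v : Fin (m+1) → Bool,
      {x | ¬(x ∈ PP E (m+1) (ext' m v) ↔ x ∈ NA E (m+1) (ext' m v))}).Finite :=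
    Set.finite_iUnion hbad
  refine Filter.eventually_cofinite.mpr (hBad.subset fun x hx => ?_)
  simp only [mem_setOf_eq] at hx
  by_contra hxB
  apply hx
  obtain ⟨s, hs⟩ := PP_exists E (m+1) x
  set v : Fin (m+1) → Bool := fun i => s i with hv
  have hcong : ∀ i < m+1, ext' m v i = s i := fun i hi => by
    simp [ext', hi, hv]
  have hP : PP E (m+1) (ext' m v) = PP E (m+1) s := PP_congr E hcong
  have hNAeq : NA E (m+1) (ext' m v) = NA E (m+1) s := by
    ext y
    simp only [NA, mem_setOf_eq]
    exact forall_congr' fun i => imp_congr_right fun hi => by rw [hcong i hi]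
  have hxv : ¬¬(x ∈ PP E (m+1) (ext' m v) ↔ x ∈ NA E (m+1) (ext' m v)) := by
    intro hc
    exact hxB (Set.mem_iUnion.mpr ⟨v, hc⟩)
  rw [hP, hNAeq] at hxv
  have hNA : x ∈ NA E (m+1) s := (not_not.mp hxv).mp hs
  rw [L_pattern E (Nat.lt_succ_self m) hs]
  exact (hNA m (Nat.lt_succ_self m)).symm

end Lift

/-- Every countable Boolean subalgebra `𝒜` of `𝒫(ℕ)/Fin` has a
lift: a Boolean subalgebra `𝒜'` of `𝒫(ℕ)` mapped bijectively onto `𝒜` by the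
quotient map `ρ` (so `ρ` restricted to `𝒜'` is a Boolean isomorphism onto `𝒜`,
since `ρ` preserves the Boolean operations). -/
theorem stmt_1 (𝒜 : Set PFin) (hcount : 𝒜.Countable)
    (hbot : rhoFin ∅ ∈ 𝒜) (htop : rhoFin Set.univ ∈ 𝒜)
    (hinf : ∀ a ∈ 𝒜, ∀ b ∈ 𝒜, pfinInf a b ∈ 𝒜)
    (hsup : ∀ a ∈ 𝒜, ∀ b ∈ 𝒜, pfinSup a b ∈ 𝒜)
    (hcompl : ∀ a ∈ 𝒜, pfinCompl a ∈ 𝒜) :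
    ∃ 𝒜' : Set (Set ℕ),
      (∅ : Set ℕ) ∈ 𝒜' ∧ (Set.univ : Set ℕ) ∈ 𝒜' ∧
      (∀ A ∈ 𝒜', ∀ B ∈ 𝒜', A ∩ B ∈ 𝒜') ∧
      (∀ A ∈ 𝒜', ∀ B ∈ 𝒜', A ∪ B ∈ 𝒜') ∧
      (∀ A ∈ 𝒜', Aᶜ ∈ 𝒜') ∧
      Set.BijOn rhoFin 𝒜' 𝒜 := by
  classical
  obtain ⟨e, he⟩ := hcount.exists_eq_range ⟨_, hbot⟩
  set E : ℕ → Set ℕ := fun n => Quotient.out (e n) with hEdef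
  have hrho : ∀ n, rhoFin (E n) = e n := fun n => Quotient.out_eq (e n)
  have hmem : ∀ n, e n ∈ 𝒜 := fun n => he ▸ Set.mem_range_self n
  have hEqv : ∀ {A B : Set ℕ}, rhoFin A = rhoFin B → Lift.Eqv A B := fun h => Quotient.eq.mp h
  have hSound : ∀ {A B : Set ℕ}, Lift.Eqv A B → rhoFin A = rhoFin B :=
    fun h => Quotient.sound h
  have hmapInf : ∀ A B : Set ℕ, pfinInf (rhoFin A) (rhoFin B) = rhoFin (A ∩ B) :=
    fun A B => rfl
  have hmapSup : ∀ A B : Set ℕ, pfinSup (rhoFin A) (rhoFin B) = rhoFin (A ∪ B) :=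
    fun A B => rfl
  have hmapCompl : ∀ A : Set ℕ, pfinCompl (rhoFin A) = rhoFin Aᶜ := fun A => rfl
  have rhoL : ∀ m, rhoFin (Lift.L E m) = e m :=
    fun m => (hSound (Lift.L_eqv E m)).trans (hrho m)
  refine ⟨Set.range (Lift.L E), ?_, ?_, ?_, ?_, ?_, ?_, ?_, ?_⟩
  · -- ∅
    obtain ⟨m, hm⟩ := (he ▸ hbot : rhoFin ∅ ∈ Set.range e)
    exact ⟨m, Lift.L_empty E (hEqv ((hrho m).trans hm))⟩
  · -- univ
    obtain ⟨m, hm⟩ := (he ▸ htop : rhoFin Set.univ ∈ Set.range e)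
    exact ⟨m, Lift.L_univ E (hEqv ((hrho m).trans hm))⟩
  · -- inter
    rintro A ⟨m, rfl⟩ B ⟨k, rfl⟩
    obtain ⟨j, hj⟩ := (he ▸ hinf _ (hmem m) _ (hmem k) :
      pfinInf (e m) (e k) ∈ Set.range e)
    have h1 : rhoFin (E m ∩ E k) = rhoFin (E j) := by
      rw [← hmapInf, hrho m, hrho k, ← hj, hrho j]
    exact ⟨j, (Lift.L_inter E (hEqv h1)).symm⟩
  · -- union
    rintro A ⟨m, rfl⟩ B ⟨k, rfl⟩
    obtain ⟨j, hj⟩ := (he ▸ hsup _ (hmem m) _ (hmem k) :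
      pfinSup (e m) (e k) ∈ Set.range e)
    have h1 : rhoFin (E m ∪ E k) = rhoFin (E j) := by
      rw [← hmapSup, hrho m, hrho k, ← hj, hrho j]
    exact ⟨j, (Lift.L_union E (hEqv h1)).symm⟩
  · -- compl
    rintro A ⟨m, rfl⟩
    obtain ⟨j, hj⟩ := (he ▸ hcompl _ (hmem m) : pfinCompl (e m) ∈ Set.range e)
    have h1 : rhoFin (E m)ᶜ = rhoFin (E j) := by
      rw [← hmapCompl, hrho m, ← hj, hrho j]
    exact ⟨j, (Lift.L_compl E (hEqv h1)).symm⟩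
  · -- MapsTo
    rintro A ⟨m, rfl⟩
    rw [rhoL m]
    exact hmem m
  · -- InjOn
    rintro A ⟨m, rfl⟩ B ⟨k, rfl⟩ hAB
    rw [rhoL m, rhoL k] at hAB
    exact Lift.L_congr E (hEqv ((hrho m).trans (hAB.trans (hrho k).symm)))
  · -- SurjOn
    intro a ha
    obtain ⟨m, rfl⟩ := (he ▸ ha : a ∈ Set.range e)
    exact ⟨Lift.L E m, ⟨m, rfl⟩, rhoL m⟩
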